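/- Let {f̂(n)}_{n∈ℤ} be complex numbers such that f̂(n) + f̂(−n) ∈ K(θ1) for all n ≥ 1, for some θ1 ∈ [0, π/2). If the symmetric partial sums Σ_{k=−n}^{n} f̂(k)e^{ikx} converge at every real x and the sum function f is continuous (i.e. f ∈ C_{2π}), then Σ_{n=1}^{∞} |f̂(n) + f̂(−n)| < ∞. -/

import Mathlib

open Filter Complex Real

noncomputable section

/-- `K(θ) = {z ∈ ℂ : |arg z| ≤ θ}`. -/
def Kset (θ : ℝ) : Set ℂ := {z : ℂ | |Complex.arg z| ≤ θ}

lemma aux_sum_Icc (h : ℤ → ℂ) (N : ℕ) :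
    ∑ k ∈ Finset.Icc (-(N : ℤ)) (N : ℤ), h k
      = h 0 + ∑ i ∈ Finset.range N, (h ((i : ℤ) + 1) + h (-(i : ℤ) - 1)) := by
  induction N with
  | zero => simp
  | succ n ih =>
    have e1 : Finset.Icc (-((n+1 : ℕ) : ℤ)) ((n+1 : ℕ) : ℤ)
        = insert (-(n : ℤ) - 1) (insert ((n : ℤ) + 1) (Finset.Icc (-(n : ℤ)) (n : ℤ))) := by
      ext k
      simp only [Finset.mem_Icc, Finset.mem_insert]
      omega
    rw [e1, Finset.sum_insert, Finset.sum_insert, ih, Finset.sum_range_succ]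
    · push_cast
      ring
    · simp only [Finset.mem_Icc]; omega
    · simp only [Finset.mem_insert, Finset.mem_Icc]; omega

/-- Lemma 3: if `f̂(n) + f̂(−n) ∈ K(θ₁)` for all `n ≥ 1` with `θ₁ ∈ [0, π/2)`, and the
symmetric partial sums of `Σ f̂(n) e^{inx}` converge everywhere to a continuous function `f`,
then `Σ_{n≥1} |f̂(n) + f̂(−n)| < ∞`. -/
theorem stmt_3 (fhat : ℤ → ℂ) (f : ℝ → ℂ) (θ₁ : ℝ) (hθ₁ : 0 ≤ θ₁) (hθ₁' : θ₁ < Real.pi / 2)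
    (hK : ∀ n : ℕ, 1 ≤ n → (fhat (n : ℤ) + fhat (-(n : ℤ))) ∈ Kset θ₁)
    (hconv : ∀ x : ℝ, Filter.Tendsto
      (fun N : ℕ => ∑ k ∈ Finset.Icc (-(N : ℤ)) (N : ℤ),
        fhat k * Complex.exp ((k : ℂ) * (x : ℂ) * Complex.I))
      Filter.atTop (nhds (f x)))
    (hcont : Continuous f) :
    Summable (fun n : ℕ => ‖fhat ((n : ℤ) + 1) + fhat (-(n : ℤ) - 1)‖) := by
  have hpi := Real.pi_pos
  have hcos : 0 < Real.cos θ₁ :=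
    Real.cos_pos_of_mem_Ioo ⟨by linarith, hθ₁'⟩
  set a : ℕ → ℂ := fun n => fhat ((n : ℤ) + 1) + fhat (-(n : ℤ) - 1) with ha
  -- sector condition for a
  have harg : ∀ n : ℕ, |Complex.arg (a n)| ≤ θ₁ := by
    intro n
    have := hK (n + 1) (Nat.le_add_left 1 n)
    simp only [Kset, Set.mem_setOf_eq] at this
    have e : a n = fhat ((n + 1 : ℕ) : ℤ) + fhat (-((n + 1 : ℕ) : ℤ)) := by
      simp only [ha]; push_cast; ring_nf
    rwa [e]
  -- Re bound
  have hre : ∀ n : ℕ, Real.cos θ₁ * ‖a n‖ ≤ (a n).re := by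
    intro n
    by_cases h0 : a n = 0
    · simp [h0]
    · have hc : Real.cos (Complex.arg (a n)) = (a n).re / ‖a n‖ :=
        Complex.cos_arg h0
      have habs : 0 < ‖a n‖ := by
        simpa using (norm_pos_iff.2 h0)
      have h1 : Real.cos θ₁ ≤ Real.cos (Complex.arg (a n)) := by
        rw [← Real.cos_abs (Complex.arg (a n))]
        apply Real.cos_le_cos_of_nonneg_of_le_pi (abs_nonneg _) (by linarith) (harg n)
      have := mul_le_mul_of_nonneg_left h1 habs.le
      rw [hc, mul_div_cancel₀ _ habs.ne'] at this
      linarith [this]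
  have hre0 : ∀ n : ℕ, 0 ≤ (a n).re := fun n =>
    le_trans (by positivity) (hre n)
  -- convergence at 0
  have h0 := hconv 0
  have hsum0 : Tendsto (fun N : ℕ => ∑ k ∈ Finset.Icc (-(N : ℤ)) (N : ℤ), fhat k)
      atTop (nhds (f 0)) := by
    refine h0.congr fun N => Finset.sum_congr rfl fun k _ => ?_
    simp
  have hT : Tendsto (fun N : ℕ => ∑ i ∈ Finset.range N, (a i).re) atTop
      (nhds ((f 0 - fhat 0).re)) := by
    have : Tendsto (fun N : ℕ => ((∑ k ∈ Finset.Icc (-(N : ℤ)) (N : ℤ), fhat k) - fhat 0).re)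
        atTop (nhds ((f 0 - fhat 0).re)) :=
      (Complex.continuous_re.tendsto _).comp (hsum0.sub tendsto_const_nhds)
    refine this.congr fun N => ?_
    rw [aux_sum_Icc fhat N]
    simp only [ha, Complex.add_re, Complex.sub_re, Complex.re_sum]
    ring
  -- partial sums bounded
  have hmono : Monotone (fun N : ℕ => ∑ i ∈ Finset.range N, (a i).re) := by
    intro m n hmn
    exact Finset.sum_le_sum_of_subset_of_nonneg (Finset.range_subset_range.2 hmn)
      (fun i _ _ => hre0 i)
  have hbdd : ∀ N, ∑ i ∈ Finset.range N, (a i).re ≤ (f 0 - fhat 0).re := fun N =>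
    hmono.ge_of_tendsto hT N
  have hsumre : Summable (fun n : ℕ => (a n).re) :=
    summable_of_sum_range_le hre0 hbdd
  have : Summable (fun n : ℕ => (Real.cos θ₁)⁻¹ * (a n).re) := hsumre.mul_left _
  refine this.of_nonneg_of_le (fun n => by positivity) (fun n => ?_)
  calc ‖fhat ((n : ℤ) + 1) + fhat (-(n : ℤ) - 1)‖ = ‖a n‖ := rfl
    _ ≤ (Real.cos θ₁)⁻¹ * (a n).re := by
        rw [inv_mul_eq_div, le_div_iff₀ hcos, mul_comm]
        exact hre n
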